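/- Let f : [-a,a] → ℝ be C^2 with f(0) = f'(0) = 0 and f'' ≠ 0 on [-a,0) ∪ (0,a]. Then there exists a C^2 function g : [-a,a] → ℝ with g(0) = 0 and g'(0) ≠ 0, such that g'' ≠ 0 on [-a,0) ∪ (0,a], g = f near ±a, g ≥ f on [0,a], and g ≤ f on [-a,0]. Moreover if f''(0) ≠ 0 then g''(0) ≠ 0. -/

import Mathlib

open Set Filter

private lemma loc_deriv {F L : ℝ → ℝ} {x v : ℝ} (hL : HasDerivAt L v x)
    (h : ∀ᶠ y in nhds x, F y = L y) : HasDerivAt F v x :=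
  hL.congr_of_eventuallyEq h

private lemma glue_deriv {F L R : ℝ → ℝ} {c v : ℝ}
    (hL : HasDerivAt L v c) (hR : HasDerivAt R v c)
    (heL : ∀ᶠ x in nhds c, x ≤ c → F x = L x)
    (heR : ∀ᶠ x in nhds c, c ≤ x → F x = R x) :
    HasDerivAt F v c := by
  have hcL : F c = L c := heL.self_of_nhds le_rfl
  have hcR : F c = R c := heR.self_of_nhds le_rfl
  have h1 : HasDerivWithinAt F v (Iic c) c := by
    refine hL.hasDerivWithinAt.congr_of_eventuallyEq ?_ hcL
    filter_upwards [mem_nhdsWithin_of_mem_nhds heL, self_mem_nhdsWithin] with x hx hx'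
    exact hx hx'
  have h2 : HasDerivWithinAt F v (Ici c) c := by
    refine hR.hasDerivWithinAt.congr_of_eventuallyEq ?_ hcR
    filter_upwards [mem_nhdsWithin_of_mem_nhds heR, self_mem_nhdsWithin] with x hx hx'
    exact hx hx'
  have h3 := h1.union h2
  rwa [Iic_union_Ici, hasDerivWithinAt_univ] at h3


noncomputable def S0 (d e x : ℝ) : ℝ :=
  e*d/2*(1 + (2*x-d)/d - 16*((2*x-d)/d)^3 + 23*((2*x-d)/d)^4 - 9*((2*x-d)/d)^5)
noncomputable def S1 (d e x : ℝ) : ℝ :=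
  e*(1 - 48*((2*x-d)/d)^2 + 92*((2*x-d)/d)^3 - 45*((2*x-d)/d)^4)
noncomputable def S2 (d e x : ℝ) : ℝ :=
  (2*e/d)*(-(96*((2*x-d)/d)) + 276*((2*x-d)/d)^2 - 180*((2*x-d)/d)^3)

private lemma hw (d : ℝ) (x : ℝ) : HasDerivAt (fun x : ℝ => (2*x-d)/d) (2/d) x := by
  simpa using (((hasDerivAt_id x).const_mul (2:ℝ)).sub_const d).div_const d

private lemma hS0 (d e : ℝ) (hd : d ≠ 0) (x : ℝ) :
    HasDerivAt (S0 d e) (S1 d e x) x := by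
  have h := (((((hasDerivAt_const x (1:ℝ)).add (hw d x)).sub
      (((hw d x).pow 3).const_mul 16)).add (((hw d x).pow 4).const_mul 23)).sub
      (((hw d x).pow 5).const_mul 9)).const_mul (e*d/2)
  have hfun : S0 d e = fun y => e*d/2*(1 + (2*y-d)/d - 16*((2*y-d)/d)^3 + 23*((2*y-d)/d)^4 - 9*((2*y-d)/d)^5) := rfl
  rw [hfun]
  refine HasDerivAt.congr_deriv h ?_
  simp [S1]; field_simp; ring

private lemma hS1 (d e : ℝ) (hd : d ≠ 0) (x : ℝ) :
    HasDerivAt (S1 d e) (S2 d e x) x := by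
  have h := ((((hasDerivAt_const x (1:ℝ)).sub
      (((hw d x).pow 2).const_mul 48)).add (((hw d x).pow 3).const_mul 92)).sub
      (((hw d x).pow 4).const_mul 45)).const_mul e
  have hfun : S1 d e = fun y => e*(1 - 48*((2*y-d)/d)^2 + 92*((2*y-d)/d)^3 - 45*((2*y-d)/d)^4) := rfl
  rw [hfun]
  refine HasDerivAt.congr_deriv h ?_
  simp [S2]; field_simp; ring
section
variable {d e : ℝ}

private lemma S0_half (hd : d ≠ 0) : S0 d e (d/2) = e*(d/2) := by
  unfold S0; field_simp; ring
private lemma S1_half (hd : d ≠ 0) : S1 d e (d/2) = e := by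
  unfold S1; field_simp; ring
private lemma S2_half (hd : d ≠ 0) : S2 d e (d/2) = 0 := by
  unfold S2; field_simp; ring
private lemma S0_top (hd : d ≠ 0) : S0 d e d = 0 := by
  unfold S0; field_simp; ring
private lemma S1_top (hd : d ≠ 0) : S1 d e d = 0 := by
  unfold S1; field_simp; ring
private lemma S2_top (hd : d ≠ 0) : S2 d e d = 0 := by
  unfold S2; field_simp; ring

end
noncomputable def q0 (d e x : ℝ) : ℝ := if x ≤ d/2 then e*x else if x ≤ d then S0 d e x else 0
noncomputable def q1 (d e x : ℝ) : ℝ := if x ≤ d/2 then e else if x ≤ d then S1 d e x else 0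
noncomputable def q2 (d e x : ℝ) : ℝ := if x ≤ d/2 then 0 else if x ≤ d then S2 d e x else 0

section
variable {d e : ℝ}

private lemma hq0 (hd : 0 < d) (x : ℝ) : HasDerivAt (q0 d e) (q1 d e x) x := by
  have hd' : d ≠ 0 := ne_of_gt hd
  rcases lt_trichotomy x (d/2) with h | h | h
  · rw [show q1 d e x = e by simp [q1, h.le]]
    refine loc_deriv (by simpa using (hasDerivAt_id x).const_mul e) ?_
    filter_upwards [Iio_mem_nhds h] with y hy
    simp [q0, (mem_Iio.1 hy).le]
  · subst h
    rw [show q1 d e (d/2) = e by simp [q1]]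
    refine glue_deriv (L := fun y => e*y) (R := S0 d e)
      (by simpa using (hasDerivAt_id (d/2)).const_mul e)
      (by simpa [S1_half hd'] using hS0 d e hd' (d/2)) ?_ ?_
    · filter_upwards with y hy; simp [q0, hy]
    · filter_upwards [Iio_mem_nhds (by linarith : d/2 < d)] with y hy hy'
      rcases eq_or_lt_of_le hy' with h' | h'
      · simp [q0, ← h', S0_half hd']
      · simp [q0, not_le.2 h', (mem_Iio.1 hy).le]
  · rcases lt_trichotomy x d with h2 | h2 | h2
    · rw [show q1 d e x = S1 d e x by simp [q1, not_le.2 h, h2.le]]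
      refine loc_deriv (hS0 d e hd' x) ?_
      filter_upwards [Ioo_mem_nhds h h2] with y hy
      simp [q0, not_le.2 hy.1, hy.2.le]
    · rw [h2]
      rw [show q1 d e d = 0 by simp [q1, not_le.2 (by linarith : d/2 < d), S1_top hd']]
      refine glue_deriv (L := S0 d e) (R := fun _ => 0)
        (by simpa [S1_top hd'] using hS0 d e hd' d) (hasDerivAt_const d 0) ?_ ?_
      · filter_upwards [Ioi_mem_nhds (by linarith : d/2 < d)] with y hy hy'
        simp [q0, not_le.2 (mem_Ioi.1 hy), hy']
      · filter_upwards with y hy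
        rcases eq_or_lt_of_le hy with h' | h'
        · simp [q0, ← h', not_le.2 (by linarith : d/2 < d), S0_top hd']
        · simp [q0, not_le.2 (lt_trans (by linarith : d/2 < d) h'), not_le.2 h']
    · rw [show q1 d e x = 0 by simp [q1, not_le.2 h, not_le.2 h2]]
      refine loc_deriv (hasDerivAt_const x 0) ?_
      filter_upwards [Ioi_mem_nhds h2] with y hy
      simp [q0, not_le.2 (lt_trans (by linarith : d/2 < d) hy), not_le.2 (mem_Ioi.1 hy)]
private lemma hq1 (hd : 0 < d) (x : ℝ) : HasDerivAt (q1 d e) (q2 d e x) x := by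
  have hd' : d ≠ 0 := ne_of_gt hd
  rcases lt_trichotomy x (d/2) with h | h | h
  · rw [show q2 d e x = 0 by simp [q2, h.le]]
    refine loc_deriv (hasDerivAt_const x e) ?_
    filter_upwards [Iio_mem_nhds h] with y hy
    simp [q1, (mem_Iio.1 hy).le]
  · subst h
    rw [show q2 d e (d/2) = 0 by simp [q2]]
    refine glue_deriv (L := fun _ => e) (R := S1 d e)
      (hasDerivAt_const (d/2) e)
      (by simpa [S2_half hd'] using hS1 d e hd' (d/2)) ?_ ?_
    · filter_upwards with y hy; simp [q1, hy]
    · filter_upwards [Iio_mem_nhds (by linarith : d/2 < d)] with y hy hy'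
      rcases eq_or_lt_of_le hy' with h' | h'
      · simp [q1, ← h', S1_half hd']
      · simp [q1, not_le.2 h', (mem_Iio.1 hy).le]
  · rcases lt_trichotomy x d with h2 | h2 | h2
    · rw [show q2 d e x = S2 d e x by simp [q2, not_le.2 h, h2.le]]
      refine loc_deriv (hS1 d e hd' x) ?_
      filter_upwards [Ioo_mem_nhds h h2] with y hy
      simp [q1, not_le.2 hy.1, hy.2.le]
    · rw [h2]
      rw [show q2 d e d = 0 by simp [q2, not_le.2 (by linarith : d/2 < d), S2_top hd']]
      refine glue_deriv (L := S1 d e) (R := fun _ => 0)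
        (by simpa [S2_top hd'] using hS1 d e hd' d) (hasDerivAt_const d 0) ?_ ?_
      · filter_upwards [Ioi_mem_nhds (by linarith : d/2 < d)] with y hy hy'
        simp [q1, not_le.2 (mem_Ioi.1 hy), hy']
      · filter_upwards with y hy
        rcases eq_or_lt_of_le hy with h' | h'
        · simp [q1, ← h', not_le.2 (by linarith : d/2 < d), S1_top hd']
        · simp [q1, not_le.2 (lt_trans (by linarith : d/2 < d) h'), not_le.2 h']
    · rw [show q2 d e x = 0 by simp [q2, not_le.2 h, not_le.2 h2]]
      refine loc_deriv (hasDerivAt_const x 0) ?_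
      filter_upwards [Ioi_mem_nhds h2] with y hy
      simp [q1, not_le.2 (lt_trans (by linarith : d/2 < d) hy), not_le.2 (mem_Ioi.1 hy)]
private lemma q0_zero (hd : 0 < d) {x : ℝ} (hx : d ≤ x) : q0 d e x = 0 := by
  have hd' : d ≠ 0 := ne_of_gt hd
  rcases eq_or_lt_of_le hx with h | h
  · simp [q0, ← h, not_le.2 (by linarith : d/2 < d), S0_top hd']
  · simp [q0, not_le.2 (lt_trans (by linarith : d/2 < d) h), not_le.2 h]

private lemma q0_nonneg (hd : 0 < d) (he : 0 ≤ e) {x : ℝ} (hx : 0 ≤ x) :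
    0 ≤ q0 d e x := by
  unfold q0
  split_ifs with h1 h2
  · exact mul_nonneg he hx
  · unfold S0
    set u : ℝ := (2*x-d)/d with hu
    have hu0 : 0 ≤ u := div_nonneg (by linarith) hd.le
    have hu1 : u ≤ 1 := (div_le_one hd).2 (by linarith)
    have key : 1 + u - 16*u^3 + 23*u^4 - 9*u^5 = (1-u)^3*(9*u^2+4*u+1) := by ring
    rw [key]
    have h1u : 0 ≤ (1-u) := by linarith
    positivity
  · exact le_refl _

private lemma q2_zero_left {x : ℝ} (hx : x ≤ d/2) : q2 d e x = 0 := by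
  simp [q2, hx]

private lemma q2_zero_right (hd : 0 < d) {x : ℝ} (hx : d ≤ x) : q2 d e x = 0 := by
  have hd' : d ≠ 0 := ne_of_gt hd
  rcases eq_or_lt_of_le hx with h | h
  · simp [q2, ← h, not_le.2 (by linarith : d/2 < d), S2_top hd']
  · simp [q2, not_le.2 (lt_trans (by linarith : d/2 < d) h), not_le.2 h]

private lemma q2_bound (hd : 0 < d) (he : 0 ≤ e) (x : ℝ) :
    |q2 d e x| ≤ 48*e/d := by
  have hnn : 0 ≤ 48*e/d := by positivity
  unfold q2
  split_ifs with h1 h2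
  · simpa using hnn
  · unfold S2
    set u : ℝ := (2*x-d)/d with hu
    have hu0 : 0 ≤ u := div_nonneg (by linarith [not_le.1 h1]) hd.le
    have hu1 : u ≤ 1 := (div_le_one hd).2 (by linarith)
    have hP : |(-(96*u) + 276*u^2 - 180*u^3)| ≤ 24 := by
      rw [abs_le]
      constructor
      · nlinarith [sq_nonneg (2*u-1), mul_nonneg hu0 (sub_nonneg.2 hu1), sq_nonneg u,
          mul_nonneg (mul_nonneg hu0 hu0) (sub_nonneg.2 hu1), sq_nonneg (1-u)]
      · nlinarith [sq_nonneg (2*u-1), mul_nonneg hu0 (sub_nonneg.2 hu1), sq_nonneg u,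
          mul_nonneg (mul_nonneg hu0 hu0) (sub_nonneg.2 hu1), sq_nonneg (1-u)]
    calc |(2*e/d) * (-(96*u) + 276*u^2 - 180*u^3)|
        = (2*e/d) * |(-(96*u) + 276*u^2 - 180*u^3)| := by
          rw [abs_mul, abs_of_nonneg (by positivity : (0:ℝ) ≤ 2*e/d)]
      _ ≤ (2*e/d) * 24 := by
          exact mul_le_mul_of_nonneg_left hP (by positivity)
      _ = 48*e/d := by ring
  · simpa using hnn
end
noncomputable def pp (d e x : ℝ) : ℝ := if 0 ≤ x then q0 d e x else -q0 d e (-x)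
noncomputable def pp1 (d e x : ℝ) : ℝ := if 0 ≤ x then q1 d e x else q1 d e (-x)
noncomputable def pp2 (d e x : ℝ) : ℝ := if 0 ≤ x then q2 d e x else -q2 d e (-x)

section
variable {d e : ℝ}

private lemma hpp (hd : 0 < d) (x : ℝ) : HasDerivAt (pp d e) (pp1 d e x) x := by
  rcases lt_trichotomy x 0 with h | h | h
  · rw [show pp1 d e x = q1 d e (-x) by simp [pp1, not_le.2 h]]
    have hcomp := ((hq0 (e := e) hd (-x)).comp x (hasDerivAt_neg x)).neg
    refine loc_deriv (by simpa [Function.comp] using hcomp) ?_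
    filter_upwards [Iio_mem_nhds h] with y hy
    simp [pp, not_le.2 (mem_Iio.1 hy)]
  · subst h
    rw [show pp1 d e 0 = e by simp [pp1, q1, (by linarith : (0:ℝ) ≤ d/2)]]
    refine loc_deriv (L := fun y => e*y) (by simpa using (hasDerivAt_id 0).const_mul e) ?_
    filter_upwards [Ioo_mem_nhds (by linarith : -(d/2) < 0) (by linarith : (0:ℝ) < d/2)]
      with y hy
    rcases le_or_gt 0 y with h' | h'
    · simp [pp, h', q0, (le_of_lt hy.2)]
    · have : -y ≤ d/2 := by have := hy.1; linarith
      rw [show pp d e y = -q0 d e (-y) by simp [pp, not_le.2 h']]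
      simp only [q0, if_pos this]; ring
  · rw [show pp1 d e x = q1 d e x by simp [pp1, h.le]]
    refine loc_deriv (hq0 hd x) ?_
    filter_upwards [Ioi_mem_nhds h] with y hy
    simp [pp, (mem_Ioi.1 hy).le]

private lemma hpp1 (hd : 0 < d) (x : ℝ) : HasDerivAt (pp1 d e) (pp2 d e x) x := by
  rcases lt_trichotomy x 0 with h | h | h
  · rw [show pp2 d e x = -q2 d e (-x) by simp [pp2, not_le.2 h]]
    have hcomp := (hq1 (e := e) hd (-x)).comp x (hasDerivAt_neg x)
    refine loc_deriv (by simpa [Function.comp] using hcomp) ?_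
    filter_upwards [Iio_mem_nhds h] with y hy
    simp [pp1, not_le.2 (mem_Iio.1 hy)]
  · subst h
    rw [show pp2 d e 0 = 0 by simp [pp2, q2, (by linarith : (0:ℝ) ≤ d/2)]]
    refine loc_deriv (hasDerivAt_const 0 e) ?_
    filter_upwards [Ioo_mem_nhds (by linarith : -(d/2) < 0) (by linarith : (0:ℝ) < d/2)]
      with y hy
    rcases le_or_gt 0 y with h' | h'
    · simp [pp1, h', q1, (le_of_lt hy.2)]
    · have : -y ≤ d/2 := by have := hy.1; linarith
      rw [show pp1 d e y = q1 d e (-y) by simp [pp1, not_le.2 h']]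
      simp [q1, this]
  · rw [show pp2 d e x = q2 d e x by simp [pp2, h.le]]
    refine loc_deriv (hq1 hd x) ?_
    filter_upwards [Ioi_mem_nhds h] with y hy
    simp [pp1, (mem_Ioi.1 hy).le]
end
section
variable {d e : ℝ}

private lemma contS2 : Continuous (S2 d e) := by
  unfold S2; fun_prop

private lemma contq2 (hd : 0 < d) : Continuous (q2 d e) := by
  have hd' : d ≠ 0 := ne_of_gt hd
  have hinner : Continuous (fun x => if x ≤ d then S2 d e x else 0) := by
    refine Continuous.if_le contS2 continuous_const continuous_id continuous_const ?_
    intro x hx; rw [hx, S2_top hd']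
  have : Continuous (fun x => if x ≤ d/2 then (0:ℝ) else if x ≤ d then S2 d e x else 0) := by
    refine Continuous.if_le continuous_const hinner continuous_id continuous_const ?_
    intro x hx
    rw [hx]; simp [if_pos (by linarith : d/2 ≤ d), S2_half hd']
  exact this

private lemma contpp2 (hd : 0 < d) : Continuous (pp2 d e) := by
  refine Continuous.if_le (contq2 hd) (((contq2 hd).comp continuous_neg).neg)
    continuous_const continuous_id ?_
  intro x hx
  rw [← hx]
  simp [q2_zero_left (d := d) (e := e) (by linarith : (0:ℝ) ≤ d/2)]

private lemma pp_at0 (hd : 0 < d) : pp d e 0 = 0 := by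
  simp [pp, q0, (by linarith : (0:ℝ) ≤ d/2)]
private lemma pp1_at0 (hd : 0 < d) : pp1 d e 0 = e := by
  simp [pp1, q1, (by linarith : (0:ℝ) ≤ d/2)]
private lemma pp2_at0 (hd : 0 < d) : pp2 d e 0 = 0 := by
  simp [pp2, q2_zero_left (d := d) (e := e) (by linarith : (0:ℝ) ≤ d/2)]

private lemma pp_zero_pos (hd : 0 < d) {x : ℝ} (hx : d ≤ x) : pp d e x = 0 := by
  rw [show pp d e x = q0 d e x by simp [pp, le_trans hd.le hx]]
  exact q0_zero hd hx

private lemma pp_zero_neg (hd : 0 < d) {x : ℝ} (hx : x ≤ -d) : pp d e x = 0 := by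
  have hx0 : x < 0 := by linarith
  rw [show pp d e x = -q0 d e (-x) by simp [pp, not_le.2 hx0]]
  rw [q0_zero hd (by linarith : d ≤ -x)]
  simp

private lemma pp_nonneg (hd : 0 < d) (he : 0 ≤ e) {x : ℝ} (hx : 0 ≤ x) :
    0 ≤ pp d e x := by
  rw [show pp d e x = q0 d e x by simp [pp, hx]]
  exact q0_nonneg hd he hx

private lemma pp_nonpos (hd : 0 < d) (he : 0 ≤ e) {x : ℝ} (hx : x ≤ 0) :
    pp d e x ≤ 0 := by
  rcases eq_or_lt_of_le hx with h | h
  · rw [h, pp_at0 hd]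
  · rw [show pp d e x = -q0 d e (-x) by simp [pp, not_le.2 h]]
    simp [q0_nonneg hd he (by linarith : (0:ℝ) ≤ -x)]

private lemma pp2_bound (hd : 0 < d) (he : 0 ≤ e) (x : ℝ) :
    |pp2 d e x| ≤ 48*e/d := by
  unfold pp2
  split_ifs with h
  · exact q2_bound hd he x
  · rw [abs_neg]; exact q2_bound hd he (-x)

end
/-- (Lemma 6.2 of the paper.) Let `f : [-a,a] → ℝ` be `C²` with
`f(0) = f'(0) = 0` and `f'' ≠ 0` on `[-a,0) ∪ (0,a]`.  Then there exists a `C²` function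
`g : [-a,a] → ℝ` with `g(0) = 0`, `g'(0) ≠ 0`, `g'' ≠ 0` on `[-a,0) ∪ (0,a]`, `g = f` near
`±a`, `g ≥ f` on `[0,a]` and `g ≤ f` on `[-a,0]`; moreover if `f''(0) ≠ 0` then `g''(0) ≠ 0`. -/
theorem stmt_6 (a : ℝ) (ha : 0 < a) (f f' f'' : ℝ → ℝ)
    (hd1 : ∀ x ∈ Set.Icc (-a) a, HasDerivWithinAt f (f' x) (Set.Icc (-a) a) x)
    (hd2 : ∀ x ∈ Set.Icc (-a) a, HasDerivWithinAt f' (f'' x) (Set.Icc (-a) a) x)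
    (hf''c : ContinuousOn f'' (Set.Icc (-a) a))
    (hf0 : f 0 = 0) (hf'0 : f' 0 = 0)
    (hne : ∀ x ∈ Set.Ico (-a) 0 ∪ Set.Ioc 0 a, f'' x ≠ 0) :
    ∃ g g' g'' : ℝ → ℝ,
      (∀ x ∈ Set.Icc (-a) a, HasDerivWithinAt g (g' x) (Set.Icc (-a) a) x) ∧
      (∀ x ∈ Set.Icc (-a) a, HasDerivWithinAt g' (g'' x) (Set.Icc (-a) a) x) ∧
      ContinuousOn g'' (Set.Icc (-a) a) ∧
      g 0 = 0 ∧ g' 0 ≠ 0 ∧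
      (∀ x ∈ Set.Ico (-a) 0 ∪ Set.Ioc 0 a, g'' x ≠ 0) ∧
      (∃ δ > (0 : ℝ), ∀ x ∈ Set.Icc (-a) a, (x ≤ -a + δ ∨ a - δ ≤ x) → g x = f x) ∧
      (∀ x ∈ Set.Icc 0 a, f x ≤ g x) ∧
      (∀ x ∈ Set.Icc (-a) 0, g x ≤ f x) ∧
      (f'' 0 ≠ 0 → g'' 0 ≠ 0) := by
  -- minimum of |f''| on the right support interval
  have hsub1 : Icc (a/4) (a/2) ⊆ Icc (-a) a := Icc_subset_Icc (by linarith) (by linarith)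
  have hsub2 : Icc (-(a/2)) (-(a/4)) ⊆ Icc (-a) a := Icc_subset_Icc (by linarith) (by linarith)
  obtain ⟨x₁, hx₁mem, hx₁min⟩ := (isCompact_Icc : IsCompact (Icc (a/4) (a/2))).exists_isMinOn
    (Set.nonempty_Icc.2 (by linarith)) ((hf''c.mono hsub1).abs)
  obtain ⟨x₂, hx₂mem, hx₂min⟩ :=
    (isCompact_Icc : IsCompact (Icc (-(a/2)) (-(a/4)))).exists_isMinOn
    (Set.nonempty_Icc.2 (by linarith)) ((hf''c.mono hsub2).abs)
  have hm₁ : 0 < |f'' x₁| :=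
    abs_pos.2 (hne x₁ (Or.inr ⟨by linarith [hx₁mem.1], by linarith [hx₁mem.2]⟩))
  have hm₂ : 0 < |f'' x₂| :=
    abs_pos.2 (hne x₂ (Or.inl ⟨by linarith [hx₂mem.1], by linarith [hx₂mem.2]⟩))
  set m : ℝ := min |f'' x₁| |f'' x₂| with hm_def
  have hm : 0 < m := lt_min hm₁ hm₂
  set d : ℝ := a/2 with hd_def
  have hd : 0 < d := by rw [hd_def]; linarith
  set e : ℝ := m*d/96 with he_def
  have he : 0 < e := by rw [he_def]; positivity
  have hbound : ∀ x : ℝ, |pp2 d e x| ≤ m/2 := by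
    intro x
    have h := pp2_bound hd he.le x
    have : 48*e/d = m/2 := by
      rw [he_def]; field_simp; ring
    linarith [h, this.symm.le]
  refine ⟨fun x => f x + pp d e x, fun x => f' x + pp1 d e x, fun x => f'' x + pp2 d e x,
    ?_, ?_, ?_, ?_, ?_, ?_, ?_, ?_, ?_, ?_⟩
  · intro x hx; exact (hd1 x hx).add (hpp hd x).hasDerivWithinAt
  · intro x hx; exact (hd2 x hx).add (hpp1 hd x).hasDerivWithinAt
  · exact hf''c.add (contpp2 hd).continuousOn
  · beta_reduce; rw [hf0, pp_at0 hd]; ring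
  · beta_reduce; rw [hf'0, pp1_at0 hd]; simpa using ne_of_gt he
  · -- g'' ≠ 0
    intro x hx
    beta_reduce
    have key : ∀ y : ℝ, m ≤ |f'' y| → f'' y + pp2 d e y ≠ 0 := by
      intro y hy
      have h1 := hbound y
      have h2 : |f'' y| ≤ |f'' y + pp2 d e y| + |pp2 d e y| := by
        simpa using abs_add_le (f'' y + pp2 d e y) (-pp2 d e y)
      exact abs_pos.1 (by linarith)
    rcases hx with ⟨hx1, hx2⟩ | ⟨hx1, hx2⟩
    · -- x ∈ [-a, 0)
      have hxneg : ¬ (0 ≤ x) := not_le.2 hx2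
      have hpp2x : pp2 d e x = -q2 d e (-x) := by simp [pp2, hxneg]
      rcases le_or_gt (-x) (d/2) with h | h
      · rw [hpp2x, q2_zero_left h]
        simpa using hne x (Or.inl ⟨hx1, hx2⟩)
      · rcases le_or_gt d (-x) with h' | h'
        · rw [hpp2x, q2_zero_right hd h']
          simpa using hne x (Or.inl ⟨hx1, hx2⟩)
        · refine key x ?_
          have hxm : x ∈ Icc (-(a/2)) (-(a/4)) := by
            constructor
            · rw [hd_def] at h'; linarith
            · rw [hd_def] at h; linarith
          calc m ≤ |f'' x₂| := min_le_right _ _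
            _ ≤ |f'' x| := hx₂min hxm
    · -- x ∈ (0, a]
      have hxpos : (0:ℝ) ≤ x := hx1.le
      have hpp2x : pp2 d e x = q2 d e x := by simp [pp2, hxpos]
      rcases le_or_gt x (d/2) with h | h
      · rw [hpp2x, q2_zero_left h]
        simpa using hne x (Or.inr ⟨hx1, hx2⟩)
      · rcases le_or_gt d x with h' | h'
        · rw [hpp2x, q2_zero_right hd h']
          simpa using hne x (Or.inr ⟨hx1, hx2⟩)
        · refine key x ?_
          have hxm : x ∈ Icc (a/4) (a/2) := by
            constructor
            · rw [hd_def] at h; linarith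
            · rw [hd_def] at h'; linarith
          calc m ≤ |f'' x₁| := min_le_left _ _
            _ ≤ |f'' x| := hx₁min hxm
  · refine ⟨a/2, by linarith, ?_⟩
    intro x _ hx
    beta_reduce
    rcases hx with h | h
    · rw [pp_zero_neg hd (by rw [hd_def]; linarith : x ≤ -d)]; ring
    · rw [pp_zero_pos hd (by rw [hd_def]; linarith : d ≤ x)]; ring
  · intro x hx
    beta_reduce
    have := pp_nonneg hd he.le hx.1
    linarith
  · intro x hx
    beta_reduce
    have := pp_nonpos hd he.le hx.2
    linarith
  · intro h
    beta_reduce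
    rw [pp2_at0 hd]
    simpa using h
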